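/- Local complementation preserves the foliage relation: if G is a connected simple graph, a ∈ V, and τ_a(G) is the graph obtained by local complementation at a (complementing the induced subgraph on the neighborhood of a), then for all vertices v, w: v ~ w in G if and only if v ~ w in τ_a(G), where ~ is the foliage equivalence relation. -/

import Mathlib

namespace Foliage

variable {V : Type*}

open Classical in
noncomputable def adjNum (G : SimpleGraph V) (v u : V) : ℕ :=
  if G.Adj v u then 1 else 0

def Rel (G : SimpleGraph V) (v w : V) : Prop :=
  G.Reachable v w ∧
    ∀ u₁ u₂ : V, u₁ ≠ v → u₁ ≠ w → u₂ ≠ v → u₂ ≠ w →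
      adjNum G v u₁ * adjNum G w u₂ = adjNum G v u₂ * adjNum G w u₁

/-- Local complementation at a vertex `x`: the induced subgraph on the
neighborhood of `x` is complemented (addition of `Γ_{K_{N_x}}` mod 2). -/
def lc (G : SimpleGraph V) (x : V) : SimpleGraph V where
  Adj v w := v ≠ w ∧ ¬ (G.Adj v w ↔ G.Adj x v ∧ G.Adj x w)
  symm := ⟨by
    intro v w h
    refine ⟨h.1.symm, fun hiff => h.2 ?_⟩
    constructor
    · intro hvw; exact (hiff.mp (G.adj_symm hvw)).symm
    · intro hx; exact G.adj_symm (hiff.mpr hx.symm)⟩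
  loopless := ⟨fun v h => h.1 rfl⟩

-- auxiliary lemmas (to be inserted before the theorem)

lemma adjNum_mul_eq_iff (G : SimpleGraph V) (v w u₁ u₂ : V) :
    adjNum G v u₁ * adjNum G w u₂ = adjNum G v u₂ * adjNum G w u₁ ↔
      ((G.Adj v u₁ ∧ G.Adj w u₂) ↔ (G.Adj v u₂ ∧ G.Adj w u₁)) := by
  classical
  unfold adjNum
  split_ifs <;> simp_all

def Cond (G : SimpleGraph V) (v w : V) : Prop :=
  ∀ u₁ u₂ : V, u₁ ≠ v → u₁ ≠ w → u₂ ≠ v → u₂ ≠ w →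
    ((G.Adj v u₁ ∧ G.Adj w u₂) ↔ (G.Adj v u₂ ∧ G.Adj w u₁))

lemma rel_iff (G : SimpleGraph V) (v w : V) :
    Rel G v w ↔ G.Reachable v w ∧ Cond G v w := by
  unfold Rel Cond
  refine and_congr_right fun _ => ?_
  constructor
  · intro h u₁ u₂ h1 h2 h3 h4
    exact (adjNum_mul_eq_iff G v w u₁ u₂).mp (h u₁ u₂ h1 h2 h3 h4)
  · intro h u₁ u₂ h1 h2 h3 h4
    exact (adjNum_mul_eq_iff G v w u₁ u₂).mpr (h u₁ u₂ h1 h2 h3 h4)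

def Leaf (G : SimpleGraph V) (v w : V) : Prop :=
  ∀ u, u ≠ v → u ≠ w → ¬ G.Adj v u

def Twin (G : SimpleGraph V) (v w : V) : Prop :=
  ∀ u, u ≠ v → u ≠ w → (G.Adj v u ↔ G.Adj w u)

lemma twin_symm {G : SimpleGraph V} {v w : V} (h : Twin G v w) : Twin G w v :=
  fun u h1 h2 => (h u h2 h1).symm

lemma cond_char (G : SimpleGraph V) (v w : V) :
    Cond G v w ↔ Leaf G v w ∨ Leaf G w v ∨ Twin G v w := by
  classical
  constructor
  · intro h
    by_cases hv : Leaf G v w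
    · exact Or.inl hv
    by_cases hw : Leaf G w v
    · exact Or.inr (Or.inl hw)
    right; right
    unfold Leaf at hv hw
    push_neg at hv hw
    obtain ⟨u₁, h1v, h1w, hA1⟩ := hv
    obtain ⟨u₂, h2w, h2v, hA2⟩ := hw
    intro u huv huw
    constructor
    · intro hAu
      exact ((h u u₂ huv huw h2v h2w).mp ⟨hAu, hA2⟩).2
    · intro hAu
      exact ((h u₁ u h1v h1w huv huw).mp ⟨hA1, hAu⟩).1
  · rintro (hv | hw | ht) <;> intro u₁ u₂ h1v h1w h2v h2w
    · have := hv u₁ h1v h1w; have := hv u₂ h2v h2w; tauto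
    · have := hw u₁ h1w h1v; have := hw u₂ h2w h2v; tauto
    · have := ht u₁ h1v h1w; have := ht u₂ h2v h2w; tauto

lemma lc_adj (G : SimpleGraph V) (x v u : V) :
    (lc G x).Adj v u ↔ v ≠ u ∧ ¬ (G.Adj v u ↔ G.Adj x v ∧ G.Adj x u) :=
  Iff.rfl

lemma lc_adj_x (G : SimpleGraph V) (x u : V) :
    (lc G x).Adj x u ↔ G.Adj x u := by
  rw [lc_adj]
  have h1 : ¬ G.Adj x x := G.loopless.irrefl x
  constructor
  · rintro ⟨hne, h⟩
    by_contra hA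
    exact h (by tauto)
  · intro hA
    exact ⟨G.ne_of_adj hA, by tauto⟩

lemma lc_adj_x' (G : SimpleGraph V) (x v : V) :
    (lc G x).Adj v x ↔ G.Adj v x := by
  rw [(lc G x).adj_comm, lc_adj_x, G.adj_comm]

lemma adj_reachable_lc (G : SimpleGraph V) (x : V) {a b : V} (h : G.Adj a b) :
    (lc G x).Reachable a b := by
  by_cases hB : (lc G x).Adj a b
  · exact hB.reachable
  · rw [lc_adj] at hB
    push_neg at hB
    have hiff := hB (G.ne_of_adj h)
    obtain ⟨hxa, hxb⟩ := hiff.mp h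
    exact ((lc_adj_x' G x a).mpr (G.adj_symm hxa)).reachable.trans
      ((lc_adj_x G x b).mpr hxb).reachable

lemma reachable_lc (G : SimpleGraph V) (x : V) {v w : V} (h : G.Reachable v w) :
    (lc G x).Reachable v w := by
  obtain ⟨p⟩ := h
  induction p with
  | nil => exact SimpleGraph.Reachable.refl _
  | cons h q ih => exact (adj_reachable_lc G x h).trans ih

lemma lc_lc (G : SimpleGraph V) (x : V) : lc (lc G x) x = G := by
  ext v w
  show (v ≠ w ∧ ¬ ((lc G x).Adj v w ↔ (lc G x).Adj x v ∧ (lc G x).Adj x w)) ↔ G.Adj v w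
  rw [lc_adj_x, lc_adj_x, lc_adj]
  have hne : G.Adj v w → v ≠ w := G.ne_of_adj
  by_cases hvw : v = w
  · subst hvw
    simp [G.loopless.irrefl v]
  · tauto

lemma leaf_lc (G : SimpleGraph V) (x v w : V) (hLv : Leaf G v w) :
    Leaf (lc G x) v w ∨ Leaf (lc G x) w v ∨ Twin (lc G x) v w := by
  by_cases hxw : x = w
  · subst hxw
    by_cases hvw : G.Adj v x
    · right; right
      intro u huv huw
      have hAvu : ¬ G.Adj v u := hLv u huv huw
      rw [lc_adj, lc_adj_x]
      have hwv : G.Adj x v := G.adj_symm hvw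
      have h1 : v ≠ u := Ne.symm huv
      tauto
    · left
      intro u huv huw hB
      rw [lc_adj] at hB
      have h1 := hLv u huv huw
      have hwv : ¬ G.Adj x v := fun h => hvw (G.adj_symm h)
      tauto
  · left
    intro u huv huw hB
    rw [lc_adj] at hB
    have h1 : ¬ G.Adj v u := hLv u huv huw
    have h2 : ¬ G.Adj x v := by
      by_cases hxv : x = v
      · subst hxv; exact G.loopless.irrefl x
      · intro h; exact hLv x hxv hxw (G.adj_symm h)
    tauto

lemma twin_lc_eq (G : SimpleGraph V) (v w : V) (hT : Twin G v w) :
    Leaf (lc G v) v w ∨ Leaf (lc G v) w v ∨ Twin (lc G v) v w := by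
  by_cases hvw : G.Adj v w
  · right; left
    intro u huw huv hB
    rw [lc_adj] at hB
    have ht := hT u huv huw
    tauto
  · right; right
    intro u huv huw
    have ht := hT u huv huw
    rw [lc_adj_x, lc_adj]
    constructor
    · intro hA
      have hwu : w ≠ u := fun h => G.loopless.irrefl u (h ▸ ht.mp hA)
      refine ⟨hwu, ?_⟩
      have : G.Adj w u := ht.mp hA
      tauto
    · rintro ⟨hwu, h⟩
      tauto

lemma twin_lc (G : SimpleGraph V) (x v w : V) (hT : Twin G v w) :
    Leaf (lc G x) v w ∨ Leaf (lc G x) w v ∨ Twin (lc G x) v w := by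
  by_cases hxv : x = v
  · subst hxv; exact twin_lc_eq G x w hT
  · by_cases hxw : x = w
    · subst hxw
      rcases twin_lc_eq G x v (twin_symm hT) with h | h | h
      · exact Or.inr (Or.inl h)
      · exact Or.inl h
      · exact Or.inr (Or.inr (twin_symm h))
    · right; right
      intro u huv huw
      have hAx := hT x hxv hxw
      by_cases hux : u = x
      · subst hux
        rw [lc_adj_x', lc_adj_x']
        exact hAx
      · rw [lc_adj, lc_adj]
        have ht := hT u huv huw
        have hAx' : G.Adj x v ↔ G.Adj x w :=
          ⟨fun h => G.adj_symm (hAx.mp (G.adj_symm h)), fun h => G.adj_symm (hAx.mpr (G.adj_symm h))⟩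
        have h1 : v ≠ u := Ne.symm huv
        have h2 : w ≠ u := Ne.symm huw
        tauto

lemma cond_lc (G : SimpleGraph V) (x v w : V) (h : Cond G v w) :
    Cond (lc G x) v w := by
  rw [cond_char] at h ⊢
  rcases h with h | h | h
  · exact leaf_lc G x v w h
  · rcases leaf_lc G x w v h with h' | h' | h'
    · exact Or.inr (Or.inl h')
    · exact Or.inl h'
    · exact Or.inr (Or.inr (twin_symm h'))
  · exact twin_lc G x v w h

lemma rel_lc (G : SimpleGraph V) (x : V) {v w : V} (h : Rel G v w) :
    Rel (lc G x) v w := by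
  rw [rel_iff] at h ⊢
  exact ⟨reachable_lc G x h.1, cond_lc G x v w h.2⟩

theorem lc_preserves_foliage_rel [Fintype V] (G : SimpleGraph V)
    (hconn : G.Connected) (x : V) :
    ∀ v w : V, Rel G v w ↔ Rel (lc G x) v w := by
  intro v w
  constructor
  · exact rel_lc G x
  · intro h
    have h2 := rel_lc (lc G x) x h
    rwa [lc_lc] at h2

end Foliage
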